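/- For λ < 0 and all x > 0, 1 - F_λ(x) < 2φ(x)φ(λx) / (|λ|(1+λ²)x²), where F_λ is the skew-normal cdf with parameter λ. -/

import Mathlib

open Real MeasureTheory Filter

noncomputable def stdPhi (x : ℝ) : ℝ := (Real.sqrt (2 * Real.pi))⁻¹ * Real.exp (-x ^ 2 / 2)

noncomputable def stdCdf (x : ℝ) : ℝ := ∫ t in Set.Iic x, stdPhi t

noncomputable def snCdf (l x : ℝ) : ℝ := ∫ t in Set.Iic x, 2 * stdPhi t * stdCdf (l * t)

section Aux
open Set Topology

lemma stdPhi_pos (x : ℝ) : 0 < stdPhi x := by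
  unfold stdPhi; positivity

lemma stdPhi_even (x : ℝ) : stdPhi (-x) = stdPhi x := by
  unfold stdPhi; rw [neg_pow]; norm_num

lemma continuous_stdPhi : Continuous stdPhi := by
  unfold stdPhi; continuity

lemma stdPhi_eq (x : ℝ) : stdPhi x = (Real.sqrt (2 * Real.pi))⁻¹ * Real.exp (-(1/2) * x ^ 2) := by
  unfold stdPhi; ring_nf

lemma integrable_stdPhi : Integrable stdPhi := by
  have := (integrable_exp_neg_mul_sq (b := 1/2) (by norm_num)).const_mul
    (Real.sqrt (2 * Real.pi))⁻¹
  refine this.congr ?_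
  filter_upwards with x
  rw [stdPhi_eq]

lemma integral_stdPhi : ∫ x, stdPhi x = 1 := by
  simp_rw [stdPhi_eq]
  rw [integral_const_mul, integral_gaussian]
  have : π / (1/2) = 2 * π := by ring
  rw [this, inv_mul_cancel₀]
  positivity

lemma hasDerivAt_stdPhi (t : ℝ) : HasDerivAt stdPhi (-t * stdPhi t) t := by
  have h1 : HasDerivAt (fun t : ℝ => -t ^ 2 / 2) (-t) t := by
    have := ((hasDerivAt_pow 2 t).neg).div_const 2
    refine this.congr_deriv ?_
    ring
  have h2 := (h1.exp).const_mul (Real.sqrt (2 * Real.pi))⁻¹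
  unfold stdPhi
  refine h2.congr_deriv ?_
  ring

lemma tendsto_stdPhi_atTop : Tendsto stdPhi atTop (𝓝 0) := by
  have h1 : Tendsto (fun t : ℝ => t ^ 2 / 2) atTop atTop :=
    (tendsto_pow_atTop two_ne_zero).atTop_div_const (by norm_num)
  have h2 : Tendsto (fun t : ℝ => Real.exp (-(t ^ 2 / 2))) atTop (𝓝 0) :=
    Real.tendsto_exp_neg_atTop_nhds_zero.comp h1
  have := h2.const_mul (Real.sqrt (2 * Real.pi))⁻¹
  rw [mul_zero] at this
  refine this.congr fun t => ?_
  unfold stdPhi; ring_nf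

lemma monotone_stdCdf : Monotone stdCdf := fun a b hab =>
  setIntegral_mono_set integrable_stdPhi.integrableOn
    (Eventually.of_forall fun t => (stdPhi_pos t).le)
    (HasSubset.Subset.eventuallyLE (Iic_subset_Iic.mpr hab))

lemma stdCdf_nonneg (y : ℝ) : 0 ≤ stdCdf y :=
  setIntegral_nonneg measurableSet_Iic fun t _ => (stdPhi_pos t).le

lemma stdCdf_eq_Ioi (y : ℝ) : stdCdf y = ∫ t in Set.Ioi (-y), stdPhi t := by
  unfold stdCdf
  rw [← integral_comp_neg_Iic]
  exact setIntegral_congr_fun measurableSet_Iic fun t _ => (stdPhi_even t).symm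

lemma stdCdf_add_neg (y : ℝ) : stdCdf (-y) + stdCdf y = 1 := by
  rw [stdCdf_eq_Ioi y]
  unfold stdCdf
  rw [intervalIntegral.integral_Iic_add_Ioi integrable_stdPhi.integrableOn
    integrable_stdPhi.integrableOn, integral_stdPhi]

lemma stdCdf_le_one (y : ℝ) : stdCdf y ≤ 1 := by
  have := stdCdf_add_neg y
  have := stdCdf_nonneg (-y)
  linarith

lemma integrableOn_mul_stdPhi {y : ℝ} (hy : 0 < y) :
    IntegrableOn (fun t => t * stdPhi t) (Set.Ioi y) := by
  refine integrableOn_Ioi_deriv_of_nonneg' (g := fun t => -stdPhi t) (l := 0)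
    (fun t _ => (hasDerivAt_stdPhi t).neg.congr_deriv (by ring)) ?_ ?_
  · intro t ht
    exact mul_nonneg (le_of_lt (hy.trans ht)) (stdPhi_pos t).le
  · simpa using tendsto_stdPhi_atTop.neg

lemma integral_Ioi_mul_stdPhi {y : ℝ} (hy : 0 < y) :
    ∫ t in Set.Ioi y, t * stdPhi t = stdPhi y := by
  have := integral_Ioi_of_hasDerivAt_of_nonneg' (g := fun t => -stdPhi t)
    (g' := fun t => t * stdPhi t) (a := y) (l := 0)
    (fun t _ => (hasDerivAt_stdPhi t).neg.congr_deriv (by ring))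
    (fun t ht => mul_nonneg (le_of_lt (hy.trans ht)) (stdPhi_pos t).le)
    (by simpa using tendsto_stdPhi_atTop.neg)
  simpa using this

lemma mills {y : ℝ} (hy : 0 < y) : stdCdf (-y) ≤ stdPhi y / y := by
  rw [stdCdf_eq_Ioi, neg_neg]
  have key := integral_Ioi_mul_stdPhi hy
  have hint := integrableOn_mul_stdPhi hy
  calc ∫ t in Set.Ioi y, stdPhi t ≤ ∫ t in Set.Ioi y, y⁻¹ * (t * stdPhi t) := by
        refine setIntegral_mono_on integrable_stdPhi.integrableOn
          (hint.const_mul y⁻¹) measurableSet_Ioi fun t ht => ?_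
        rw [← mul_assoc]
        nth_rewrite 1 [← one_mul (stdPhi t)]
        refine mul_le_mul_of_nonneg_right ?_ (stdPhi_pos t).le
        rw [inv_mul_eq_div, le_div_iff₀ hy, one_mul]
        exact le_of_lt ht
    _ = stdPhi y / y := by
        rw [integral_const_mul, key, inv_mul_eq_div]

lemma aesm_snInt (l : ℝ) : AEStronglyMeasurable (fun t => 2 * stdPhi t * stdCdf (l * t)) volume := by
  refine AEStronglyMeasurable.mul ?_ ?_
  · exact (continuous_const.mul continuous_stdPhi).aestronglyMeasurable
  · exact (monotone_stdCdf.measurable.comp (measurable_const_mul l)).aestronglyMeasurable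

lemma integrable_snInt (l : ℝ) : Integrable (fun t => 2 * stdPhi t * stdCdf (l * t)) := by
  refine (integrable_stdPhi.const_mul 2).mono (aesm_snInt l) ?_
  filter_upwards with t
  have hp := stdPhi_pos t
  have h0 := stdCdf_nonneg (l * t)
  have h1 := stdCdf_le_one (l * t)
  rw [Real.norm_eq_abs, Real.norm_eq_abs, abs_of_nonneg (by nlinarith),
    abs_of_nonneg (by nlinarith)]
  nlinarith

lemma integral_snInt (l : ℝ) : ∫ t, 2 * stdPhi t * stdCdf (l * t) = 1 := by
  have h1 : ∫ t, 2 * stdPhi t * stdCdf (-l * t) = ∫ t, 2 * stdPhi t * stdCdf (l * t) := by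
    rw [← integral_neg_eq_self (fun t => 2 * stdPhi t * stdCdf (l * t)) volume]
    refine integral_congr_ae (Eventually.of_forall fun t => ?_)
    simp only
    rw [stdPhi_even]
    ring_nf
  have h2 : (∫ t, 2 * stdPhi t * stdCdf (l * t)) + ∫ t, 2 * stdPhi t * stdCdf (-l * t) = 2 := by
    rw [← integral_add (integrable_snInt l) (integrable_snInt (-l))]
    have he : ∀ t : ℝ, 2 * stdPhi t * stdCdf (l * t) + 2 * stdPhi t * stdCdf (-l * t)
        = 2 * stdPhi t := by
      intro t
      have h := stdCdf_add_neg (l * t)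
      rw [show -l * t = -(l * t) by ring]
      nlinarith [stdPhi_pos t]
    simp_rw [he]
    rw [integral_const_mul, integral_stdPhi, mul_one]
  linarith

lemma tail_eq (l x : ℝ) :
    1 - snCdf l x = ∫ t in Set.Ioi x, 2 * stdPhi t * stdCdf (l * t) := by
  have := intervalIntegral.integral_Iic_add_Ioi (b := x)
    (integrable_snInt l).integrableOn (integrable_snInt l).integrableOn
  rw [integral_snInt] at this
  unfold snCdf
  linarith
lemma stdPhi_le_stdPhi_zero (u : ℝ) : stdPhi u ≤ stdPhi 0 := by
  unfold stdPhi
  have h : Real.exp (-u ^ 2 / 2) ≤ Real.exp (-(0:ℝ) ^ 2 / 2) := by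
    apply Real.exp_le_exp.mpr; nlinarith [sq_nonneg u]
  have h0 : (0:ℝ) ≤ (Real.sqrt (2 * Real.pi))⁻¹ := by positivity
  exact mul_le_mul_of_nonneg_left h h0

theorem stmt_3 (l : ℝ) (hl : l < 0) (x : ℝ) (hx : 0 < x) :
    1 - snCdf l x < 2 * stdPhi x * stdPhi (l * x) / (|l| * (1 + l ^ 2) * x ^ 2) := by
  set a : ℝ := 1 + l ^ 2 with ha
  have ha0 : (0:ℝ) < a := by positivity
  have hl0 : (0:ℝ) < |l| := abs_pos.mpr hl.ne
  have habs : |l| = -l := abs_of_neg hl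
  set P : ℝ → ℝ := fun t => 2 * stdPhi t * stdPhi (l * t) with hPdef
  have hPpos : ∀ t, 0 < P t := fun t =>
    mul_pos (mul_pos two_pos (stdPhi_pos t)) (stdPhi_pos (l * t))
  have hPcont : Continuous P :=
    (continuous_const.mul continuous_stdPhi).mul
      (continuous_stdPhi.comp (continuous_const.mul continuous_id))
  have hPderiv : ∀ t, HasDerivAt P (-(a * t) * P t) t := by
    intro t
    have h1 := hasDerivAt_stdPhi t
    have hin : HasDerivAt (fun t : ℝ => l * t) l t := by
      simpa using (hasDerivAt_id t).const_mul l
    have h2 : HasDerivAt (fun t => stdPhi (l * t)) (-(l * t) * stdPhi (l * t) * l) t :=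
      (hasDerivAt_stdPhi (l * t)).comp t hin
    have h3 := (h1.const_mul 2).mul h2
    refine h3.congr_deriv ?_
    simp only [hPdef, ha]
    ring
  have hPbound : ∀ t, P t ≤ 2 * stdPhi 0 * stdPhi t := by
    intro t
    have := stdPhi_le_stdPhi_zero (l * t)
    have hp := stdPhi_pos t
    simp only [hPdef]
    nlinarith
  -- the antiderivative
  set g : ℝ → ℝ := fun t => -(P t / (a * t ^ 2)) with hgdef
  set g' : ℝ → ℝ := fun t => P t / t + 2 * P t / (a * t ^ 3) with hg'def
  have hgderiv : ∀ t ∈ Ici x, HasDerivAt g (g' t) t := by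
    intro t ht
    have ht0 : 0 < t := lt_of_lt_of_le hx ht
    have hd : HasDerivAt (fun t : ℝ => a * t ^ 2) (a * (2 * t)) t := by
      simpa using (hasDerivAt_pow 2 t).const_mul a
    have hne : a * t ^ 2 ≠ 0 := by positivity
    have := ((hPderiv t).div hd hne).neg
    refine this.congr_deriv ?_
    simp only [hg'def]
    field_simp
    ring
  have hg'pos : ∀ t ∈ Ioi x, 0 ≤ g' t := by
    intro t ht
    have ht0 : 0 < t := hx.trans ht
    have hp := (hPpos t).le
    have : 0 ≤ P t / t := div_nonneg hp ht0.le
    have : 0 ≤ 2 * P t / (a * t ^ 3) := div_nonneg (by linarith) (by positivity)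
    simp only [hg'def]
    linarith
  have hgtendsto : Tendsto g atTop (𝓝 0) := by
    have hQ : Tendsto (fun t => P t / (a * t ^ 2)) atTop (𝓝 0) := by
      apply squeeze_zero' (g := fun t => (2 * stdPhi 0 / a) * stdPhi t)
      · filter_upwards [eventually_gt_atTop 0] with t ht
        exact div_nonneg (hPpos t).le (by positivity)
      · filter_upwards [eventually_ge_atTop 1] with t ht
        have h1 : (1:ℝ) ≤ t ^ 2 := by nlinarith
        have h2 : a ≤ a * t ^ 2 := by nlinarith
        have hp := stdPhi_pos t
        have hb := hPbound t
        have hphi0 := stdPhi_pos 0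
        calc P t / (a * t ^ 2) ≤ (2 * stdPhi 0 * stdPhi t) / a :=
              div_le_div₀ (by positivity) hb ha0 h2
          _ = (2 * stdPhi 0 / a) * stdPhi t := by ring
      · have := tendsto_stdPhi_atTop.const_mul (2 * stdPhi 0 / a)
        simpa using this
    have := hQ.neg
    simpa using this
  have hkey := integral_Ioi_of_hasDerivAt_of_nonneg' hgderiv hg'pos hgtendsto
  have hintsum : IntegrableOn g' (Ioi x) :=
    integrableOn_Ioi_deriv_of_nonneg' hgderiv hg'pos hgtendsto
  simp only [hgdef, zero_sub, neg_neg] at hkey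
  -- hkey : ∫ t in Ioi x, g' t = P x / (a * x ^ 2)
  have hvmeas : AEStronglyMeasurable (fun t => 2 * P t / (a * t ^ 3)) (volume.restrict (Ioi x)) := by
    apply ContinuousOn.aestronglyMeasurable ?_ measurableSet_Ioi
    apply ContinuousOn.div ((continuous_const.mul hPcont).continuousOn)
      ((continuous_const.mul (continuous_pow 3)).continuousOn)
    intro t ht
    have : 0 < t := hx.trans ht
    exact mul_ne_zero ha0.ne' (pow_ne_zero 3 this.ne')
  have hv_int : IntegrableOn (fun t => 2 * P t / (a * t ^ 3)) (Ioi x) := by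
    refine Integrable.mono
      ((integrable_stdPhi.const_mul (4 * stdPhi 0 / (a * x ^ 3))).integrableOn) hvmeas ?_
    rw [ae_restrict_iff' measurableSet_Ioi]
    filter_upwards with t ht
    have ht0 : 0 < t := hx.trans ht
    have hp := stdPhi_pos t
    have hb := hPbound t
    have hP0 := hPpos t
    have hphi0 := stdPhi_pos 0
    rw [Real.norm_eq_abs, Real.norm_eq_abs,
      abs_of_nonneg (div_nonneg (by linarith) (by positivity)),
      abs_of_nonneg (by positivity)]
    have hx3 : x ^ 3 ≤ t ^ 3 := pow_le_pow_left₀ hx.le (le_of_lt ht) 3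
    calc 2 * P t / (a * t ^ 3) ≤ (4 * stdPhi 0 * stdPhi t) / (a * x ^ 3) :=
          div_le_div₀ (by positivity) (by nlinarith) (by positivity) (by nlinarith)
      _ = 4 * stdPhi 0 / (a * x ^ 3) * stdPhi t := by ring
  have hu_int : IntegrableOn (fun t => P t / t) (Ioi x) := by
    have heq : (fun t => P t / t)
        = fun t => g' t - 2 * P t / (a * t ^ 3) := by
      funext t; simp only [hg'def]; ring
    rw [heq]
    exact hintsum.sub hv_int
  have hnn : (0 : ℝ → ℝ) ≤ᵐ[volume.restrict (Ioi x)] fun t => 2 * P t / (a * t ^ 3) := by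
    filter_upwards [ae_restrict_mem measurableSet_Ioi] with t ht
    have ht0 : 0 < t := hx.trans ht
    have hP0 := hPpos t
    simp only [Pi.zero_apply]
    exact div_nonneg (by linarith) (by positivity)
  have hv_pos : 0 < ∫ t in Ioi x, 2 * P t / (a * t ^ 3) := by
    rw [setIntegral_pos_iff_support_of_nonneg_ae hnn hv_int]
    refine lt_of_lt_of_le ?_
      (measure_mono (?_ : Ioi x ⊆ Function.support (fun t => 2 * P t / (a * t ^ 3)) ∩ Ioi x))
    · rw [Real.volume_Ioi]
      exact ENNReal.zero_lt_top
    · intro t ht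
      refine ⟨?_, ht⟩
      have ht0 : 0 < t := hx.trans ht
      have hP0 := hPpos t
      simp only [Function.mem_support]
      exact ne_of_gt (div_pos (by linarith) (by positivity))
  -- split the integral
  have hsplit : (∫ t in Ioi x, P t / t) + ∫ t in Ioi x, 2 * P t / (a * t ^ 3)
      = P x / (a * x ^ 2) := by
    rw [← integral_add hu_int hv_int, ← hkey]
  have hu_lt : ∫ t in Ioi x, P t / t < P x / (a * x ^ 2) := by linarith
  -- compare the tail with the integral of P t / (|l| t)
  have hmono : 1 - snCdf l x ≤ |l|⁻¹ * ∫ t in Ioi x, P t / t := by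
    rw [tail_eq, ← integral_const_mul]
    refine setIntegral_mono_on (integrable_snInt l).integrableOn
      ((hu_int.const_mul |l|⁻¹ : _)) measurableSet_Ioi fun t ht => ?_
    have ht0 : 0 < t := hx.trans ht
    have hltpos : 0 < |l| * t := mul_pos hl0 ht0
    have h4 := mills hltpos
    rw [show -(|l| * t) = l * t by rw [habs]; ring] at h4
    rw [show |l| * t = -(l * t) by rw [habs]; ring, stdPhi_even] at h4
    have hp2 : (0:ℝ) ≤ 2 * stdPhi t := by have := stdPhi_pos t; linarith
    calc 2 * stdPhi t * stdCdf (l * t)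
        ≤ 2 * stdPhi t * (stdPhi (l * t) / (-(l * t))) := by
          exact mul_le_mul_of_nonneg_left h4 hp2
      _ = |l|⁻¹ * (P t / t) := by
          simp only [hPdef]
          rw [habs]
          field_simp
  have hfinal : |l|⁻¹ * (P x / (a * x ^ 2))
      = 2 * stdPhi x * stdPhi (l * x) / (|l| * (1 + l ^ 2) * x ^ 2) := by
    simp only [hPdef, ha]
    rw [habs]
    field_simp
  calc 1 - snCdf l x ≤ |l|⁻¹ * ∫ t in Ioi x, P t / t := hmono
    _ < |l|⁻¹ * (P x / (a * x ^ 2)) := by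
        exact mul_lt_mul_of_pos_left hu_lt (by positivity)
    _ = _ := hfinal

end Aux
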